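/- The function f_k of the lower-bound construction is 1-approximately submodular: for all A,B ⊆ [n_k], f_k(A) + f_k(B) ≥ f_k(A∪B) + f_k(A∩B) − 1. -/

import Mathlib

private lemma pow_convex (x : ℝ) (hx : 1 ≤ x) (c p q : ℕ) :
    x ^ (c + p) + x ^ (c + q) ≤ x ^ (c + p + q) + x ^ c := by
  have h0 : (0:ℝ) ≤ x := by linarith
  have hp : (1:ℝ) ≤ x ^ p := one_le_pow₀ hx
  have hq : (1:ℝ) ≤ x ^ q := one_le_pow₀ hx
  have key : 0 ≤ x ^ c * ((x ^ p - 1) * (x ^ q - 1)) :=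
    mul_nonneg (pow_nonneg h0 c) (mul_nonneg (by linarith) (by linarith))
  simp only [pow_add]
  nlinarith [key]

private lemma case_a1 (k : ℕ) (hk : 1 ≤ k) (a b u n : Fin k → ℕ)
    (hsum : ∀ i, a i + b i = u i + n i)
    (hau : ∀ i, a i ≤ u i) (hbu : ∀ i, b i ≤ u i)
    (hna : ∀ i, n i ≤ a i) (hnb : ∀ i, n i ≤ b i)
    (hbb : (Finset.univ.filter (fun i => 2 ≤ u i)).card ≤ 1)
    (eA eB eu en : ℕ)
    (heA1 : eA ≤ 1) (heB1 : eB ≤ 1) (heu1 : eu ≤ 1) (hen1 : en ≤ 1)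
    (heA0 : eA = 0 ↔ Finset.univ.sup a = 0)
    (heB0 : eB = 0 ↔ Finset.univ.sup b = 0)
    (heu0 : eu = 0 ↔ Finset.univ.sup u = 0)
    (hen0 : en = 0 ↔ Finset.univ.sup n = 0) :
    Finset.univ.sup u + (Finset.univ.filter (fun i => u i = 0)).card
      + Finset.univ.sup n + (Finset.univ.filter (fun i => n i = 0)).card + eA + eB
    ≤ Finset.univ.sup a + (Finset.univ.filter (fun i => a i = 0)).card
      + Finset.univ.sup b + (Finset.univ.filter (fun i => b i = 0)).card + eu + en + 2 := by
  have huniv : (Finset.univ : Finset (Fin k)).Nonempty := ⟨⟨0, hk⟩, Finset.mem_univ _⟩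
  have hZ : ∀ t : Fin k → ℕ, (Finset.univ.filter (fun i => t i = 0)).card
      = ∑ i, if t i = 0 then 1 else 0 := fun t => Finset.card_filter _ _
  by_cases hbig : ∃ j, 2 ≤ u j
  · obtain ⟨j, hj⟩ := hbig
    have hsmall : ∀ i, i ≠ j → u i ≤ 1 := by
      intro i hij
      by_contra h
      push_neg at h
      have hi : i ∈ Finset.univ.filter (fun i => 2 ≤ u i) := by
        simp only [Finset.mem_filter, Finset.mem_univ, true_and]; omega
      have hjj : j ∈ Finset.univ.filter (fun i => 2 ≤ u i) := by
        simp only [Finset.mem_filter, Finset.mem_univ, true_and]; exact hj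
      have h2 : 1 < (Finset.univ.filter (fun i => 2 ≤ u i)).card :=
        Finset.one_lt_card.2 ⟨i, hi, j, hjj, hij⟩
      omega
    -- Z part
    have hZpart : (Finset.univ.filter (fun i => u i = 0)).card
        + (Finset.univ.filter (fun i => n i = 0)).card
        ≤ (Finset.univ.filter (fun i => a i = 0)).card
        + (Finset.univ.filter (fun i => b i = 0)).card + 1 := by
      rw [hZ u, hZ n, hZ a, hZ b, ← Finset.sum_add_distrib, ← Finset.sum_add_distrib]
      rw [← Finset.sum_erase_add _ _ (Finset.mem_univ j),
          ← Finset.sum_erase_add _ (fun i => (if a i = 0 then 1 else 0) + (if b i = 0 then 1 else 0))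
            (Finset.mem_univ j)]
      have h1 : ∑ i ∈ Finset.univ.erase j,
          ((if u i = 0 then 1 else 0) + (if n i = 0 then 1 else 0))
          ≤ ∑ i ∈ Finset.univ.erase j,
          ((if a i = 0 then 1 else 0) + (if b i = 0 then 1 else 0)) := by
        apply Finset.sum_le_sum
        intro i hi
        have h2 := hsmall i (Finset.ne_of_mem_erase hi)
        have := hsum i; have := hau i; have := hbu i; have := hna i
        split_ifs <;> omega
      have h2 : ((if u j = 0 then 1 else 0) + (if n j = 0 then 1 else 0))
          ≤ ((if a j = 0 then 1 else 0) + (if b j = 0 then 1 else 0)) + 1 := by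
        have := hsum j; have := hau j; have := hbu j; have := hna j
        split_ifs <;> omega
      omega
    have hMu : Finset.univ.sup u = u j := by
      refine le_antisymm (Finset.sup_le fun i _ => ?_) (Finset.le_sup (Finset.mem_univ j))
      by_cases h : i = j
      · subst h; exact le_rfl
      · have := hsmall i h; omega
    have hMa : a j ≤ Finset.univ.sup a := Finset.le_sup (Finset.mem_univ j)
    have hMb : b j ≤ Finset.univ.sup b := Finset.le_sup (Finset.mem_univ j)
    have hMnj : n j ≤ Finset.univ.sup n := Finset.le_sup (Finset.mem_univ j)
    have heu : eu = 1 := by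
      rcases Nat.lt_or_ge eu 1 with h | h
      · exfalso; have h0 : eu = 0 := by omega
        have := heu0.mp h0; omega
      · omega
    have hsj := hsum j
    by_cases hMn : Finset.univ.sup n ≤ n j
    · have hMneq : Finset.univ.sup n = n j := le_antisymm hMn hMnj
      omega
    · push_neg at hMn
      obtain ⟨i, _, hieq⟩ := Finset.exists_mem_eq_sup Finset.univ huniv n
      have hij : i ≠ j := by intro h; subst h; omega
      have hui : u i ≤ 1 := hsmall i hij
      have hni : n i ≤ 1 := le_trans (hna i) (le_trans (hau i) hui)
      have hai : n i ≤ a i := hna i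
      have hbi : n i ≤ b i := hnb i
      have hMa1 : a i ≤ Finset.univ.sup a := Finset.le_sup (Finset.mem_univ i)
      have hMb1 : b i ≤ Finset.univ.sup b := Finset.le_sup (Finset.mem_univ i)
      have hen : en = 1 := by
        rcases Nat.lt_or_ge en 1 with h | h
        · exfalso; have h0 : en = 0 := by omega
          have := hen0.mp h0; omega
        · omega
      omega
  · push_neg at hbig
    have hu1 : ∀ i, u i ≤ 1 := fun i => by have := hbig i; omega
    have hZeq : (Finset.univ.filter (fun i => u i = 0)).card
        + (Finset.univ.filter (fun i => n i = 0)).card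
        ≤ (Finset.univ.filter (fun i => a i = 0)).card
        + (Finset.univ.filter (fun i => b i = 0)).card := by
      rw [hZ u, hZ n, hZ a, hZ b, ← Finset.sum_add_distrib, ← Finset.sum_add_distrib]
      apply Finset.sum_le_sum
      intro i _
      have := hsum i; have := hau i; have := hbu i; have := hna i; have := hu1 i
      split_ifs <;> omega
    have hMu1 : Finset.univ.sup u ≤ 1 := Finset.sup_le fun i _ => hu1 i
    have hMn1 : Finset.univ.sup n ≤ 1 := Finset.sup_le fun i _ => le_trans (hna i) (le_trans (hau i) (hu1 i))
    have hMau : Finset.univ.sup a ≤ Finset.univ.sup u := Finset.sup_mono_fun fun i _ => hau i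
    have hMbu : Finset.univ.sup b ≤ Finset.univ.sup u := Finset.sup_mono_fun fun i _ => hbu i
    have hMna : Finset.univ.sup n ≤ Finset.univ.sup a := Finset.sup_mono_fun fun i _ => hna i
    have hMnb : Finset.univ.sup n ≤ Finset.univ.sup b := Finset.sup_mono_fun fun i _ => hnb i
    have hMuab : Finset.univ.sup u ≤ Finset.univ.sup a + Finset.univ.sup b := by
      apply Finset.sup_le
      intro i _
      have h1 : a i ≤ Finset.univ.sup a := Finset.le_sup (Finset.mem_univ i)
      have h2 : b i ≤ Finset.univ.sup b := Finset.le_sup (Finset.mem_univ i)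
      have := hsum i; have := hna i
      omega
    omega

set_option maxHeartbeats 1000000 in
theorem stmt_7 (k : ℕ) (hk : 1 ≤ k)
    (S : Fin k → Finset (Fin (k * (k + 3) / 2)))
    (hcard : ∀ i, (S i).card = i.val + 2)
    (hdisj : ∀ i j, i ≠ j → Disjoint (S i) (S j))
    (hcover : Finset.univ.biUnion S = Finset.univ)
    (fk : Finset (Fin (k * (k + 3) / 2)) → ℝ)
    (hfk : ∀ A,
      fk A =
        if (Finset.univ.filter (fun i => 2 ≤ (A ∩ S i).card)).card ≤ 1 then
          (((Finset.univ.sup (fun i => (A ∩ S i).card) : ℕ) : ℝ)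
            + ((Finset.univ.filter (fun i => A ∩ S i = ∅)).card : ℝ)
            - (if A ≠ ∅ then 1 else 0)) / 2
        else
          -((k : ℝ) + 2) ^ A.card) :
    ∀ A B, fk A + fk B ≥ fk (A ∪ B) + fk (A ∩ B) - 1 := by
  have hx1 : (1:ℝ) ≤ (k:ℝ) + 2 := by
    have : (0:ℝ) ≤ (k:ℝ) := Nat.cast_nonneg k
    linarith
  have hx3 : (3:ℝ) ≤ (k:ℝ) + 2 := by
    have : (1:ℝ) ≤ (k:ℝ) := by exact_mod_cast hk
    linarith
  -- basic partition facts
  have hempty : ∀ T : Finset (Fin (k * (k + 3) / 2)), (∀ i, T ∩ S i = ∅) → T = ∅ := by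
    intro T h
    rw [Finset.eq_empty_iff_forall_notMem]
    intro x hx
    have hx2 : x ∈ Finset.univ.biUnion S := by rw [hcover]; exact Finset.mem_univ x
    rw [Finset.mem_biUnion] at hx2
    obtain ⟨i, -, hxi⟩ := hx2
    have : x ∈ T ∩ S i := Finset.mem_inter.2 ⟨hx, hxi⟩
    rw [h i] at this
    exact absurd this (Finset.notMem_empty x)
  have hsup0 : ∀ T : Finset (Fin (k * (k + 3) / 2)),
      Finset.univ.sup (fun i => (T ∩ S i).card) = 0 ↔ T = ∅ := by
    intro T
    constructor
    · intro h
      apply hempty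
      intro i
      have h1 : (T ∩ S i).card ≤ Finset.univ.sup (fun i => (T ∩ S i).card) :=
        Finset.le_sup (f := fun i => (T ∩ S i).card) (Finset.mem_univ i)
      rw [h, Nat.le_zero, Finset.card_eq_zero] at h1
      exact h1
    · rintro rfl
      simp
  -- backbone monotonicity
  have hmono : ∀ T T' : Finset (Fin (k * (k + 3) / 2)), T ⊆ T' →
      (Finset.univ.filter (fun i => 2 ≤ (T ∩ S i).card)).card ≤
      (Finset.univ.filter (fun i => 2 ≤ (T' ∩ S i).card)).card := by
    intro T T' h
    apply Finset.card_le_card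
    apply Finset.monotone_filter_right
    intro i _ hi
    exact le_trans hi (Finset.card_le_card (Finset.inter_subset_inter h (subset_refl _)))
  -- numerator bounds
  have hlow : ∀ T : Finset (Fin (k * (k + 3) / 2)),
      (0:ℝ) ≤ ((Finset.univ.sup (fun i => (T ∩ S i).card) : ℕ) : ℝ)
        + ((Finset.univ.filter (fun i => T ∩ S i = ∅)).card : ℝ)
        - (if T ≠ ∅ then 1 else 0) := by
    intro T
    by_cases hT : T = ∅
    · rw [if_neg (by simpa using hT)]
      have h1 : (0:ℝ) ≤ ((Finset.univ.sup (fun i => (T ∩ S i).card) : ℕ) : ℝ) := by positivity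
      have h2 : (0:ℝ) ≤ ((Finset.univ.filter (fun i => T ∩ S i = ∅)).card : ℝ) := by positivity
      linarith
    · rw [if_pos hT]
      have h1 : Finset.univ.sup (fun i => (T ∩ S i).card) ≠ 0 := fun h => hT ((hsup0 T).mp h)
      have h1' : 1 ≤ Finset.univ.sup (fun i => (T ∩ S i).card) := Nat.one_le_iff_ne_zero.2 h1
      have h1'' : (1:ℝ) ≤ ((Finset.univ.sup (fun i => (T ∩ S i).card) : ℕ) : ℝ) := by
        exact_mod_cast h1'
      have h2 : (0:ℝ) ≤ ((Finset.univ.filter (fun i => T ∩ S i = ∅)).card : ℝ) := by positivity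
      linarith
  have hhigh : ∀ T : Finset (Fin (k * (k + 3) / 2)),
      ((Finset.univ.sup (fun i => (T ∩ S i).card) : ℕ) : ℝ)
        + ((Finset.univ.filter (fun i => T ∩ S i = ∅)).card : ℝ)
        - (if T ≠ ∅ then 1 else 0) ≤ 2 * (k:ℝ) + 1 := by
    intro T
    have h1 : Finset.univ.sup (fun i => (T ∩ S i).card) ≤ k + 1 := by
      apply Finset.sup_le
      intro i _
      have h2 : (T ∩ S i).card ≤ (S i).card := Finset.card_le_card Finset.inter_subset_right
      rw [hcard i] at h2
      have := i.isLt
      omega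
    have h2 : (Finset.univ.filter (fun i => T ∩ S i = ∅)).card ≤ k := by
      calc (Finset.univ.filter (fun i => T ∩ S i = ∅)).card
          ≤ (Finset.univ : Finset (Fin k)).card := Finset.card_filter_le _ _
        _ = k := by simp
    have h1' : ((Finset.univ.sup (fun i => (T ∩ S i).card) : ℕ) : ℝ) ≤ (k:ℝ) + 1 := by
      exact_mod_cast h1
    have h2' : ((Finset.univ.filter (fun i => T ∩ S i = ∅)).card : ℝ) ≤ (k:ℝ) := by
      exact_mod_cast h2
    have h3 : (0:ℝ) ≤ (if T ≠ ∅ then (1:ℝ) else 0) := by split_ifs <;> norm_num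
    linarith
  -- non-backbone sets are nonempty
  have hnb_ne : ∀ T : Finset (Fin (k * (k + 3) / 2)),
      ¬((Finset.univ.filter (fun i => 2 ≤ (T ∩ S i).card)).card ≤ 1) → 1 ≤ T.card := by
    intro T h
    push_neg at h
    have h1 : (Finset.univ.filter (fun i => 2 ≤ (T ∩ S i).card)).Nonempty :=
      Finset.card_pos.mp (by omega)
    obtain ⟨i, hi⟩ := h1
    rw [Finset.mem_filter] at hi
    have h2 : (T ∩ S i).card ≤ T.card := Finset.card_le_card Finset.inter_subset_left
    omega
  intro A B
  -- trivial containment cases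
  by_cases hBA : B ⊆ A
  · rw [Finset.union_eq_left.mpr hBA, Finset.inter_eq_right.mpr hBA]
    linarith
  by_cases hAB : A ⊆ B
  · rw [Finset.union_eq_right.mpr hAB, Finset.inter_eq_left.mpr hAB]
    linarith
  have hAltU : A.card < (A ∪ B).card := by
    apply Finset.card_lt_card
    rw [Finset.ssubset_iff_subset_ne]
    exact ⟨Finset.subset_union_left, fun h => hBA (by rw [h]; exact Finset.subset_union_right)⟩
  have hBltU : B.card < (A ∪ B).card := by
    apply Finset.card_lt_card
    rw [Finset.ssubset_iff_subset_ne]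
    exact ⟨Finset.subset_union_right, fun h => hAB (by rw [h]; exact Finset.subset_union_left)⟩
  rw [hfk A, hfk B, hfk (A ∪ B), hfk (A ∩ B)]
  by_cases hA : (Finset.univ.filter (fun i => 2 ≤ (A ∩ S i).card)).card ≤ 1
  · by_cases hB : (Finset.univ.filter (fun i => 2 ≤ (B ∩ S i).card)).card ≤ 1
    · have hI : (Finset.univ.filter (fun i => 2 ≤ ((A ∩ B) ∩ S i).card)).card ≤ 1 :=
        le_trans (hmono _ _ Finset.inter_subset_left) hA
      by_cases hU : (Finset.univ.filter (fun i => 2 ≤ ((A ∪ B) ∩ S i).card)).card ≤ 1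
      · -- case (a1): all four in backbone
        rw [if_pos hA, if_pos hB, if_pos hU, if_pos hI]
        have hsum : ∀ i, (A ∩ S i).card + (B ∩ S i).card
            = ((A ∪ B) ∩ S i).card + ((A ∩ B) ∩ S i).card := by
          intro i
          rw [Finset.union_inter_distrib_right, Finset.inter_inter_distrib_right]
          exact (Finset.card_union_add_card_inter _ _).symm
        have hau : ∀ i, (A ∩ S i).card ≤ ((A ∪ B) ∩ S i).card := fun i =>
          Finset.card_le_card (Finset.inter_subset_inter Finset.subset_union_left (subset_refl _))
        have hbu : ∀ i, (B ∩ S i).card ≤ ((A ∪ B) ∩ S i).card := fun i =>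
          Finset.card_le_card (Finset.inter_subset_inter Finset.subset_union_right (subset_refl _))
        have hna : ∀ i, ((A ∩ B) ∩ S i).card ≤ (A ∩ S i).card := fun i =>
          Finset.card_le_card (Finset.inter_subset_inter Finset.inter_subset_left (subset_refl _))
        have hnb : ∀ i, ((A ∩ B) ∩ S i).card ≤ (B ∩ S i).card := fun i =>
          Finset.card_le_card (Finset.inter_subset_inter Finset.inter_subset_right (subset_refl _))
        have heq : ∀ T : Finset (Fin (k * (k + 3) / 2)),
            ((if T ≠ ∅ then 1 else 0 : ℕ) = 0 ↔
              Finset.univ.sup (fun i => (T ∩ S i).card) = 0) := by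
          intro T
          rw [hsup0 T]
          split_ifs with h
          · simp [h]
          · simp [not_not.mp h]
        have key := case_a1 k hk (fun i => (A ∩ S i).card) (fun i => (B ∩ S i).card)
          (fun i => ((A ∪ B) ∩ S i).card) (fun i => ((A ∩ B) ∩ S i).card)
          hsum hau hbu hna hnb hU
          (if A ≠ ∅ then 1 else 0) (if B ≠ ∅ then 1 else 0)
          (if A ∪ B ≠ ∅ then 1 else 0) (if A ∩ B ≠ ∅ then 1 else 0)
          (by split_ifs <;> omega) (by split_ifs <;> omega)
          (by split_ifs <;> omega) (by split_ifs <;> omega)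
          (heq A) (heq B) (heq (A ∪ B)) (heq (A ∩ B))
        beta_reduce at key
        have hZconv : ∀ T : Finset (Fin (k * (k + 3) / 2)),
            (Finset.univ.filter (fun i => T ∩ S i = ∅)).card
            = (Finset.univ.filter (fun i => (T ∩ S i).card = 0)).card := by
          intro T
          congr 1
          apply Finset.filter_congr
          intro i _
          simp [Finset.card_eq_zero]
        have hca : ∀ T : Finset (Fin (k * (k + 3) / 2)),
            (if T ≠ ∅ then (1:ℝ) else 0) = ((if T ≠ ∅ then 1 else 0 : ℕ) : ℝ) := by
          intro T
          split_ifs <;> simp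
        rw [hZconv A, hZconv B, hZconv (A ∪ B), hZconv (A ∩ B),
            hca A, hca B, hca (A ∪ B), hca (A ∩ B)]
        have keyR := (Nat.cast_le (α := ℝ)).mpr key
        push_cast at keyR ⊢
        linarith
      · -- case (a2)
        rw [if_pos hA, if_pos hB, if_neg hU, if_pos hI]
        have h1 : 1 ≤ (A ∪ B).card := hnb_ne _ hU
        have h2 : ((k:ℝ) + 2) ^ 1 ≤ ((k:ℝ) + 2) ^ (A ∪ B).card := pow_le_pow_right₀ hx1 h1
        rw [pow_one] at h2
        have h3 := hlow A
        have h4 := hlow B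
        have h5 := hhigh (A ∩ B)
        linarith
    · -- case (b): A backbone, B not
      have hU : ¬((Finset.univ.filter (fun i => 2 ≤ ((A ∪ B) ∩ S i).card)).card ≤ 1) :=
        fun h => hB (le_trans (hmono _ _ Finset.subset_union_right) h)
      have hI : (Finset.univ.filter (fun i => 2 ≤ ((A ∩ B) ∩ S i).card)).card ≤ 1 :=
        le_trans (hmono _ _ Finset.inter_subset_left) hA
      rw [if_pos hA, if_neg hB, if_neg hU, if_pos hI]
      have h1 : ((k:ℝ) + 2) ^ (B.card + 1) ≤ ((k:ℝ) + 2) ^ (A ∪ B).card :=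
        pow_le_pow_right₀ hx1 hBltU
      rw [pow_succ] at h1
      have h2 : (1:ℝ) ≤ ((k:ℝ) + 2) ^ B.card := one_le_pow₀ hx1
      have h3 : ((k:ℝ) + 2) - 1 ≤ (((k:ℝ) + 2) - 1) * ((k:ℝ) + 2) ^ B.card :=
        le_mul_of_one_le_right (by linarith) h2
      have h4 := hlow A
      have h5 := hhigh (A ∩ B)
      nlinarith
  · by_cases hB : (Finset.univ.filter (fun i => 2 ≤ (B ∩ S i).card)).card ≤ 1
    · -- case (b'): B backbone, A not
      have hU : ¬((Finset.univ.filter (fun i => 2 ≤ ((A ∪ B) ∩ S i).card)).card ≤ 1) :=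
        fun h => hA (le_trans (hmono _ _ Finset.subset_union_left) h)
      have hI : (Finset.univ.filter (fun i => 2 ≤ ((A ∩ B) ∩ S i).card)).card ≤ 1 :=
        le_trans (hmono _ _ Finset.inter_subset_right) hB
      rw [if_neg hA, if_pos hB, if_neg hU, if_pos hI]
      have h1 : ((k:ℝ) + 2) ^ (A.card + 1) ≤ ((k:ℝ) + 2) ^ (A ∪ B).card :=
        pow_le_pow_right₀ hx1 hAltU
      rw [pow_succ] at h1
      have h2 : (1:ℝ) ≤ ((k:ℝ) + 2) ^ A.card := one_le_pow₀ hx1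
      have h3 : ((k:ℝ) + 2) - 1 ≤ (((k:ℝ) + 2) - 1) * ((k:ℝ) + 2) ^ A.card :=
        le_mul_of_one_le_right (by linarith) h2
      have h4 := hlow B
      have h5 := hhigh (A ∩ B)
      nlinarith
    · -- case (c): both not backbone
      have hU : ¬((Finset.univ.filter (fun i => 2 ≤ ((A ∪ B) ∩ S i).card)).card ≤ 1) :=
        fun h => hA (le_trans (hmono _ _ Finset.subset_union_left) h)
      have hcardsum : (A ∪ B).card + (A ∩ B).card = A.card + B.card :=
        Finset.card_union_add_card_inter A B
      have hIA : (A ∩ B).card ≤ A.card := Finset.card_le_card Finset.inter_subset_left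
      have hIB : (A ∩ B).card ≤ B.card := Finset.card_le_card Finset.inter_subset_right
      by_cases hI : (Finset.univ.filter (fun i => 2 ≤ ((A ∩ B) ∩ S i).card)).card ≤ 1
      · -- (c2): intersection in backbone
        rw [if_neg hA, if_neg hB, if_neg hU, if_pos hI]
        have ha1 : 1 ≤ A.card := hnb_ne _ hA
        have hb1 : 1 ≤ B.card := hnb_ne _ hB
        have h1 : ((k:ℝ) + 2) ^ (A.card + 1) ≤ ((k:ℝ) + 2) ^ (A ∪ B).card :=
          pow_le_pow_right₀ hx1 hAltU
        have h2 : ((k:ℝ) + 2) ^ (B.card + 1) ≤ ((k:ℝ) + 2) ^ (A ∪ B).card :=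
          pow_le_pow_right₀ hx1 hBltU
        rw [pow_succ] at h1 h2
        have h3 : ((k:ℝ) + 2) ^ A.card * 3 ≤ ((k:ℝ) + 2) ^ A.card * ((k:ℝ) + 2) :=
          mul_le_mul_of_nonneg_left hx3 (pow_nonneg (by linarith) A.card)
        have h4 : ((k:ℝ) + 2) ^ B.card * 3 ≤ ((k:ℝ) + 2) ^ B.card * ((k:ℝ) + 2) :=
          mul_le_mul_of_nonneg_left hx3 (pow_nonneg (by linarith) B.card)
        have h5 : ((k:ℝ) + 2) ^ 1 ≤ ((k:ℝ) + 2) ^ A.card := pow_le_pow_right₀ hx1 ha1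
        have h6 : ((k:ℝ) + 2) ^ 1 ≤ ((k:ℝ) + 2) ^ B.card := pow_le_pow_right₀ hx1 hb1
        rw [pow_one] at h5 h6
        have h7 := hhigh (A ∩ B)
        linarith
      · -- (c1): intersection not in backbone
        rw [if_neg hA, if_neg hB, if_neg hU, if_neg hI]
        obtain ⟨p, hp⟩ : ∃ p, A.card = (A ∩ B).card + p := ⟨A.card - (A ∩ B).card, by omega⟩
        obtain ⟨q, hq⟩ : ∃ q, B.card = (A ∩ B).card + q := ⟨B.card - (A ∩ B).card, by omega⟩
        have hu : (A ∪ B).card = (A ∩ B).card + p + q := by omega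
        rw [hp, hq, hu]
        have := pow_convex ((k:ℝ) + 2) hx1 (A ∩ B).card p q
        linarith
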